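/- Define D : ZMod 61 → ℚ by D(s) = d(61,17,i), where i ∈ [0,61) represents s and d is the lens space correction-term recursion. Then there is no subgroup O of (ZMod 61)^4 of order 61 such that D(s₁) + D(s₂) + D(s₃) + D(s₄) = 0 for every (s₁,s₂,s₃,s₄) ∈ O. (This is the correction-term obstruction showing that #⁴ 10_26 is not smoothly slice, so the knot 10_26 does not have order 4 in the smooth concordance group.) -/

import Mathlib

/-- The Ozsváth–Szabó correction term recursion for lens spaces:
`d(p,0,i) = 0` (in particular `d(1,0,0) = 0`) and
`d(p,q,i) = (pq - (2i+1-p-q)^2)/(4pq) - d(q, p mod q, i mod q)`. -/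
def dL : ℕ → ℕ → ℕ → ℚ
  | _, 0, _ => 0
  | p, q + 1, i =>
      ((p : ℚ) * (q + 1) - (2 * (i : ℚ) + 1 - p - (q + 1)) ^ 2) / (4 * p * (q + 1))
        - dL (q + 1) (p % (q + 1)) (i % (q + 1))
  termination_by p q i => q
  decreasing_by
    simp_wf
    exact Nat.le_of_lt_succ (Nat.mod_lt _ (Nat.succ_pos _))

/-- The correction terms of the lens space `L(61,17)`, the double branched cover of
the knot `10_26`, indexed by spin-c structures identified with `ZMod 61`. -/
def D : ZMod 61 → ℚ := fun s => dL 61 17 s.val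

lemma dL_zero (p i : ℕ) : dL p 0 i = 0 := by rw [dL]

lemma dL_pos (p q i : ℕ) (hq : q ≠ 0) :
    dL p q i = ((p : ℚ) * q - (2 * (i : ℚ) + 1 - p - q) ^ 2) / (4 * p * q)
      - dL q (p % q) (i % q) := by
  obtain ⟨q', rfl⟩ := Nat.exists_eq_succ_of_ne_zero hq
  rw [dL]
  simp only [Nat.succ_eq_add_one]
  push_cast
  ring_nf

lemma dL_master (i : ℕ) : dL 61 17 i =
    ((61 : ℚ) * 17 - (2 * (i : ℚ) + 1 - 61 - 17) ^ 2) / (4 * 61 * 17)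
    - (((17 : ℚ) * 10 - (2 * ((i % 17 : ℕ) : ℚ) + 1 - 17 - 10) ^ 2) / (4 * 17 * 10)
    - (((10 : ℚ) * 7 - (2 * ((i % 17 % 10 : ℕ) : ℚ) + 1 - 10 - 7) ^ 2) / (4 * 10 * 7)
    - (((7 : ℚ) * 3 - (2 * ((i % 17 % 10 % 7 : ℕ) : ℚ) + 1 - 7 - 3) ^ 2) / (4 * 7 * 3)
    - ((3 : ℚ) * 1 - (2 * ((i % 17 % 10 % 7 % 3 : ℕ) : ℚ) + 1 - 3 - 1) ^ 2) / (4 * 3 * 1)))) := by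
  rw [dL_pos 61 17 i (by norm_num)]
  rw [dL_pos 17 (61 % 17) (i % 17) (by norm_num)]
  norm_num
  rw [dL_pos 10 (17 % 10) (i % 17 % 10) (by norm_num)]
  norm_num
  rw [dL_pos 7 (10 % 7) (i % 17 % 10 % 7) (by norm_num)]
  norm_num
  rw [dL_pos 3 (7 % 3) (i % 17 % 10 % 7 % 3) (by norm_num)]
  norm_num
  rw [dL_zero]

lemma D_zero : D 0 = -54 / 61 := by
  show dL 61 17 (0 : ZMod 61).val = -54 / 61
  rw [show (0 : ZMod 61).val = 0 from rfl, dL_master]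
  norm_num

set_option maxHeartbeats 2000000 in
lemma sumD : ∑ t : ZMod 61, D t = -8 := by
  have h : ∑ t : ZMod 61, D t = ∑ i ∈ Finset.range 61, dL 61 17 i := by
    rw [← Fin.sum_univ_eq_sum_range]
    rfl
  rw [h]
  simp only [dL_master]
  norm_num [Finset.sum_range_succ]

abbrev G4 := ZMod 61 × ZMod 61 × ZMod 61 × ZMod 61

instance : Fact (Nat.card (ZMod 61)).Prime := ⟨by rw [Nat.card_zmod]; norm_num⟩

lemma key (O : AddSubgroup G4) [Fintype O] (hcard : Nat.card O = 61)
    (φ : O →+ ZMod 61) :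
    (∑ x : O, D (φ x)) = -54 ∨ (∑ x : O, D (φ x)) = -8 := by
  by_cases h0 : φ = 0
  · left
    subst h0
    simp only [AddMonoidHom.zero_apply]
    rw [Finset.sum_const, D_zero, Finset.card_univ, ← Nat.card_eq_fintype_card, hcard]
    norm_num
  · right
    have hrange : φ.range = ⊤ := by
      rcases φ.range.eq_bot_or_eq_top_of_prime_card with h | h
      · exfalso
        apply h0
        ext x
        have : φ x ∈ φ.range := ⟨x, rfl⟩
        rw [h] at this
        simpa using this
      · exact h
    have hsurj : Function.Surjective φ := by
      rwa [← AddMonoidHom.range_eq_top]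
    have hbij : Function.Bijective φ := by
      rw [Fintype.bijective_iff_surjective_and_card]
      refine ⟨hsurj, ?_⟩
      rw [← Nat.card_eq_fintype_card, ← Nat.card_eq_fintype_card, hcard, Nat.card_zmod]
    rw [Fintype.sum_bijective φ hbij _ D (fun x => rfl)]
    exact sumD

/-- There is no subgroup of `(ZMod 61)^4` of order 61 on which all quadruple sums of
correction terms of `L(61,17)` vanish; hence `#⁴ 10_26` is not smoothly slice and the
knot `10_26` does not have order 4 in the smooth concordance group. -/
theorem no_order_four_obstruction_subgroup_10_26 :
    ¬ ∃ O : AddSubgroup (ZMod 61 × ZMod 61 × ZMod 61 × ZMod 61),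
        Nat.card O = 61 ∧
        ∀ s ∈ O, D s.1 + D s.2.1 + D s.2.2.1 + D s.2.2.2 = 0 := by
  rintro ⟨O, hcard, hvan⟩
  have : Finite O := Nat.finite_of_card_ne_zero (by rw [hcard]; norm_num)
  have : Fintype O := Fintype.ofFinite O
  let p1 : O →+ ZMod 61 := (AddMonoidHom.fst _ _).comp O.subtype
  let p2 : O →+ ZMod 61 :=
    ((AddMonoidHom.fst _ _).comp (AddMonoidHom.snd _ _)).comp O.subtype
  let p3 : O →+ ZMod 61 :=
    (((AddMonoidHom.fst _ _).comp (AddMonoidHom.snd _ _)).comp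
      (AddMonoidHom.snd _ _)).comp O.subtype
  let p4 : O →+ ZMod 61 :=
    (((AddMonoidHom.snd _ _).comp (AddMonoidHom.snd _ _)).comp
      (AddMonoidHom.snd _ _)).comp O.subtype
  have hzero : (∑ x : O, (D (p1 x) + D (p2 x) + D (p3 x) + D (p4 x))) = 0 := by
    apply Finset.sum_eq_zero
    intro x _
    exact hvan (x : G4) x.2
  rw [Finset.sum_add_distrib, Finset.sum_add_distrib, Finset.sum_add_distrib] at hzero
  rcases key O hcard p1 with h1 | h1 <;>
    rcases key O hcard p2 with h2 | h2 <;>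
      rcases key O hcard p3 with h3 | h3 <;>
        rcases key O hcard p4 with h4 | h4 <;>
          rw [h1, h2, h3, h4] at hzero <;> norm_num at hzero
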